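/- Let X be a smooth normed space. Then Birkhoff–James orthogonality on X is right additive: if x ⊥ y and x ⊥ z then x ⊥ (y + z). -/

import Mathlib

open RCLike

/-- A support functional at `x`: a norm-one continuous linear functional with `φ x = ‖x‖`. -/
def SuppFunc (𝕜 : Type*) [RCLike 𝕜] {X : Type*} [NormedAddCommGroup X] [NormedSpace 𝕜 X]
    (x : X) (φ : X →L[𝕜] 𝕜) : Prop :=
  ‖φ‖ = 1 ∧ φ x = (‖x‖ : 𝕜)

/-- `X` is smooth at `x` if there is a unique support functional at `x`. -/
def NormSmoothAt (𝕜 : Type*) [RCLike 𝕜] {X : Type*} [NormedAddCommGroup X] [NormedSpace 𝕜 X]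
    (x : X) : Prop := ∃! φ : X →L[𝕜] 𝕜, SuppFunc 𝕜 x φ

/-- `X` is smooth if it is smooth at every nonzero point. -/
def NormSmooth (𝕜 : Type*) (X : Type*) [RCLike 𝕜] [NormedAddCommGroup X] [NormedSpace 𝕜 X] :
    Prop := ∀ x : X, x ≠ 0 → NormSmoothAt 𝕜 x

/-- `sip` is the canonical semi-inner product `[u,v] = ‖v‖ * φ_v u` built from support
functionals (on a smooth space this pins `sip` down uniquely). -/
def IsCompatSIP (𝕜 : Type*) {X : Type*} [RCLike 𝕜] [NormedAddCommGroup X] [NormedSpace 𝕜 X]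
    (sip : X → X → 𝕜) : Prop :=
  (∀ u : X, sip u 0 = 0) ∧
  ∀ (u v : X) (φ : X →L[𝕜] 𝕜), SuppFunc 𝕜 v φ → sip u v = (‖v‖ : 𝕜) * φ u

/-- Birkhoff–James orthogonality: `x ⊥ y` iff `‖x + a • y‖ ≥ ‖x‖` for all scalars. -/
def BJOrth (𝕜 : Type*) {X : Type*} [RCLike 𝕜] [NormedAddCommGroup X] [NormedSpace 𝕜 X]
    (x y : X) : Prop := ∀ a : 𝕜, ‖x‖ ≤ ‖x + a • y‖

/-- A semi-inner product compatible with the norm: additive and homogeneous in the first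
variable, conjugate-homogeneous in the second, positive definite, Cauchy–Schwarz, and
`[x,x] = ‖x‖²`. -/
def IsSIP (𝕜 : Type*) {X : Type*} [RCLike 𝕜] [NormedAddCommGroup X] [NormedSpace 𝕜 X]
    (sip : X → X → 𝕜) : Prop :=
  (∀ x y z : X, sip (x + y) z = sip x z + sip y z) ∧
  (∀ (a : 𝕜) (x y : X), sip (a • x) y = a * sip x y) ∧
  (∀ (a : 𝕜) (x y : X), sip x (a • y) = (starRingEnd 𝕜) a * sip x y) ∧
  (∀ x : X, x ≠ 0 → 0 < re (sip x x) ∧ im (sip x x) = 0) ∧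
  (∀ x y : X, ‖sip x y‖ ≤ Real.sqrt (re (sip x x)) * Real.sqrt (re (sip y y))) ∧
  (∀ x : X, sip x x = (‖x‖ : 𝕜) ^ 2)

theorem bj_supp {𝕜 : Type*} [RCLike 𝕜] {X : Type*} [NormedAddCommGroup X] [NormedSpace 𝕜 X]
    {x y : X} (hx : x ≠ 0) (h : BJOrth 𝕜 x y) :
    ∃ φ : X →L[𝕜] 𝕜, SuppFunc 𝕜 x φ ∧ φ y = 0 := by
  set S : Submodule 𝕜 X := 𝕜 ∙ y with hS
  haveI : IsClosed (S : Set X) := (Submodule.closed_of_finiteDimensional S)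
  -- continuous quotient map
  let q : X →L[𝕜] (X ⧸ S) := LinearMap.mkContinuous S.mkQ 1
    (fun m => by simpa using Submodule.Quotient.norm_mk_le S m)
  have hq : ∀ m : X, q m = Submodule.Quotient.mk m := fun m => rfl
  have hxq : ‖x‖ ≤ ‖q x‖ := by
    refine le_of_forall_pos_le_add fun ε hε => le_of_lt ?_
    obtain ⟨m, hm, hlt⟩ := Submodule.Quotient.norm_mk_lt (S := S) (Submodule.Quotient.mk x) hε
    have hmem : m - x ∈ S := (Submodule.Quotient.eq S).mp hm
    obtain ⟨a, ha⟩ := Submodule.mem_span_singleton.mp hmem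
    have hxm : x + a • y = m := by rw [ha] at *; abel
    calc ‖x‖ ≤ ‖x + a • y‖ := h a
      _ = ‖m‖ := by rw [hxm]
      _ < ‖q x‖ + ε := hlt
  have hqx : ‖q x‖ = ‖x‖ := le_antisymm (by simpa [hq] using Submodule.Quotient.norm_mk_le S x) hxq
  have hqx0 : q x ≠ 0 := by
    intro h0
    apply hx
    have : ‖x‖ = 0 := by rw [← hqx, h0, norm_zero]
    exact norm_eq_zero.mp this
  obtain ⟨g, hg1, hgx⟩ := exists_dual_vector 𝕜 (q x) (by rw [hqx]; exact norm_ne_zero_iff.mpr hx)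
  refine ⟨g.comp q, ⟨?_, ?_⟩, ?_⟩
  · apply le_antisymm
    · refine ContinuousLinearMap.opNorm_le_bound _ zero_le_one fun m => ?_
      calc ‖g (q m)‖ ≤ ‖g‖ * ‖q m‖ := g.le_opNorm _
        _ ≤ 1 * ‖m‖ := by
            rw [hg1, one_mul, one_mul]
            simpa [hq] using Submodule.Quotient.norm_mk_le S m
        _ = 1 * ‖m‖ := rfl
    · have : ‖x‖ = ‖g (q x)‖ := by rw [hgx, hqx]; simp
      by_contra hlt
      push_neg at hlt
      have := (g.comp q).le_opNorm x
      rw [ContinuousLinearMap.comp_apply] at this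
      nlinarith [norm_pos_iff.mpr hx, this, (g.comp q).le_opNorm x,
        (show ‖g (q x)‖ = ‖x‖ by rw [hgx, hqx]; simp)]
  · show g (q x) = _
    rw [hgx, hqx]
  · show g (q y) = 0
    have : q y = 0 := by
      rw [hq]
      exact (Submodule.Quotient.mk_eq_zero S).mpr (Submodule.mem_span_singleton_self y)
    rw [this, map_zero]


theorem stmt3 {𝕜 : Type*} [RCLike 𝕜] {X : Type*} [NormedAddCommGroup X] [NormedSpace 𝕜 X]
    (hsm : NormSmooth 𝕜 X) (x y z : X)
    (hxy : BJOrth 𝕜 x y) (hxz : BJOrth 𝕜 x z) :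
    BJOrth 𝕜 x (y + z) := by
  by_cases hx : x = 0
  · intro a; simp [hx]
  obtain ⟨φ₁, hφ₁, hy0⟩ := bj_supp hx hxy
  obtain ⟨φ₂, hφ₂, hz0⟩ := bj_supp hx hxz
  obtain ⟨φ, hφ, huniq⟩ := hsm x hx
  have e1 : φ₁ = φ₂ := by rw [huniq φ₁ hφ₁, huniq φ₂ hφ₂]
  intro a
  have : φ₁ (x + a • (y + z)) = φ₁ x := by
    simp [map_add, map_smul, hy0, hz0, e1 ▸ hy0, show φ₁ z = 0 from e1 ▸ hz0]
  calc ‖x‖ = ‖φ₁ x‖ := by rw [hφ₁.2]; simp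
    _ = ‖φ₁ (x + a • (y + z))‖ := by rw [this]
    _ ≤ ‖φ₁‖ * ‖x + a • (y + z)‖ := φ₁.le_opNorm _
    _ = ‖x + a • (y + z)‖ := by rw [hφ₁.1, one_mul]
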